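/- In an Einstein like (ε)-para Sasakian manifold, the Ricci operator Q satisfies (∇_Y Q)X = −εb η(X)Y + c η(X)φY − ( b g(X,Y) − 2εb η(X)η(Y) − εc g(φX,Y) ) ξ for all vector fields X, Y. -/
import Mathlib


/-- In an Einstein like (ε)-para Sasakian manifold, the Ricci operator
`Q` (with `QX = aX + bφX + εc η(X)ξ`) satisfies
`(∇_Y Q)X = −εb η(X)Y + c η(X)φY − (b g(X,Y) − 2εb η(X)η(Y) − εc g(φX,Y))ξ`.
The covariant derivatives `∇φ`, `∇η`, `∇ξ` are the (ε)-para Sasakian ones, and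
`∇Q` obeys the Leibniz rule coming from `QX = aX + bφX + εc η(X)ξ`. -/
theorem einstein_like_epsPS_nabla_Q {V : Type*} [AddCommGroup V] [Module ℝ V]
    (φ : V →ₗ[ℝ] V) (ξ : V) (η : V →ₗ[ℝ] ℝ) (g : LinearMap.BilinForm ℝ V)
    (ε : ℝ) (hε : ε = 1 ∨ ε = -1)
    (hsym : ∀ X Y, g X Y = g Y X)
    (hφ2 : ∀ X, φ (φ X) = X - η X • ξ)
    (hηξ : η ξ = 1) (hφξ : φ ξ = 0) (hηφ : ∀ X, η (φ X) = 0)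
    (hmetric : ∀ X Y, g (φ X) (φ Y) = g X Y - ε * η X * η Y)
    (hgξ : ∀ X, g X ξ = ε * η X)
    -- covariant derivatives in an (ε)-para Sasakian manifold:
    (nablaφ : V → V → V) (nablaη : V → V → ℝ) (nablaξ : V → V)
    (hnφ : ∀ X Y, nablaφ X Y = -(g (φ X) (φ Y)) • ξ - (ε * η Y) • φ (φ X))
    (hnη : ∀ X Y, nablaη X Y = g (φ X) Y)
    (hnξ : ∀ X, nablaξ X = ε • φ X)
    -- Einstein like: Q X = a X + b φX + εc η(X) ξ, and Leibniz rule for ∇Q: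
    (Q : V → V) (a b c : ℝ)
    (hQ : ∀ X, Q X = a • X + b • φ X + (ε * c * η X) • ξ)
    (nablaQ : V → V → V)
    (hLeib : ∀ Y X, nablaQ Y X =
      b • nablaφ Y X + (ε * c * nablaη Y X) • ξ + (ε * c * η X) • nablaξ Y) :
    ∀ Y X, nablaQ Y X = -(ε * b * η X) • Y + (c * η X) • φ Y
      - (b * g X Y - 2 * ε * b * η X * η Y - ε * c * g (φ X) Y) • ξ := by
  intro Y X
  have hε2 : ε * ε = 1 := by rcases hε with h | h <;> rw [h] <;> norm_num
  have hsw : g (φ Y) X = g (φ X) Y := by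
    have h1 := hmetric (φ X) Y
    rw [hφ2, LinearMap.BilinForm.sub_left, LinearMap.BilinForm.smul_left,
      hηφ, hsym ξ (φ Y), hgξ, hηφ] at h1
    rw [hsym (φ Y) X]
    linarith [h1]
  rw [hLeib, hnφ, hnη, hnξ, hφ2, hmetric, hsw, hsym X Y]
  rcases hε with rfl | rfl <;> match_scalars <;> ring
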